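/- With H, M, γ, ψ as above, there exists S_ψ ≥ M such that for all α > M, ψ'(α) > 0 if and only if α > S_ψ; moreover ψ is strictly increasing on (S_ψ, ∞) and hence injective there. -/

import Mathlib

open MeasureTheory Set Filter Metric Topology

lemma psi_hasDeriv (H : Measure ℝ) [IsProbabilityMeasure H] (M γ : ℝ)
    (hM : 0 < M) (hγ : 0 < γ) (hae : ∀ᵐ l ∂H, l ∈ Set.Icc 0 M)
    (α : ℝ) (hα : M < α) :
    HasDerivAt (fun x => x + ∫ l, γ * x * l / (x - l) ∂H)
      (1 - γ * ∫ l, l ^ 2 / (α - l) ^ 2 ∂H) α := by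
  set ε : ℝ := (α - M) / 2 with hε
  have hε0 : 0 < ε := by simp [hε]; linarith
  have key : ∀ x ∈ ball α ε, ∀ l ∈ Set.Icc 0 M, ε < x - l := by
    intro x hx l hl
    rw [mem_ball, Real.dist_eq, abs_lt] at hx
    have := hl.2
    simp only [hε] at *
    linarith
  have hmeas : ∀ x : ℝ, AEStronglyMeasurable (fun l => γ * x * l / (x - l)) H := by
    intro x
    exact (Measurable.div (by fun_prop) (by fun_prop)).aestronglyMeasurable
  have hα_ball : α ∈ ball α ε := mem_ball_self hε0
  have hα0 : (0:ℝ) < α := lt_trans hM hα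
  have hF_int : Integrable (fun l => γ * α * l / (α - l)) H := by
    refine (integrable_const (γ * α * M / ε)).mono' (hmeas α) ?_
    filter_upwards [hae] with l hl
    have h1 : ε < α - l := key α hα_ball l hl
    have h0 : (0:ℝ) ≤ γ * α * l / (α - l) := by
      apply div_nonneg
      · have := hl.1; positivity
      · linarith
    rw [Real.norm_eq_abs, abs_of_nonneg h0]
    apply div_le_div₀ (by positivity) _ hε0 h1.le
    have h2 := hl.1; have h3 := hl.2
    nlinarith [mul_pos hγ hα0]
  have hF'_meas : AEStronglyMeasurable (fun l => -(γ * l ^ 2 / (α - l) ^ 2)) H := by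
    exact ((Measurable.div (by fun_prop) (by fun_prop)).neg).aestronglyMeasurable
  have h_bound : ∀ᵐ l ∂H, ∀ x ∈ ball α ε, ‖-(γ * l ^ 2 / (x - l) ^ 2)‖ ≤ γ * M ^ 2 / ε ^ 2 := by
    filter_upwards [hae] with l hl x hx
    have h1 : ε < x - l := key x hx l hl
    have h0 : (0:ℝ) ≤ γ * l ^ 2 / (x - l) ^ 2 := by positivity
    rw [norm_neg, Real.norm_eq_abs, abs_of_nonneg h0]
    apply div_le_div₀ (by positivity) _ (by positivity) _
    · have h2 := hl.1; have h3 := hl.2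
      have hll : l ^ 2 ≤ M ^ 2 := by nlinarith
      exact mul_le_mul_of_nonneg_left hll hγ.le
    · nlinarith
  have h_diff : ∀ᵐ l ∂H, ∀ x ∈ ball α ε,
      HasDerivAt (fun x => γ * x * l / (x - l)) (-(γ * l ^ 2 / (x - l) ^ 2)) x := by
    filter_upwards [hae] with l hl x hx
    have h1 : ε < x - l := key x hx l hl
    have hne : x - l ≠ 0 := by linarith
    have hu : HasDerivAt (fun x : ℝ => γ * x * l) (γ * l) x := by
      simpa using ((hasDerivAt_id x).const_mul γ).mul_const l
    have hv : HasDerivAt (fun x : ℝ => x - l) 1 x := (hasDerivAt_id x).sub_const l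
    have : HasDerivAt (fun x : ℝ => γ * x * l / (x - l))
        ((γ * l * (x - l) - γ * x * l * 1) / (x - l) ^ 2) x := hu.fun_div hv hne
    convert this using 1
    ring
  have main := hasDerivAt_integral_of_dominated_loc_of_deriv_le (ball_mem_nhds α hε0)
    (Filter.Eventually.of_forall fun x => hmeas x) hF_int hF'_meas h_bound
    (integrable_const _) h_diff
  have h2 : HasDerivAt (fun x => x + ∫ l, γ * x * l / (x - l) ∂H)
      (1 + ∫ l, -(γ * l ^ 2 / (α - l) ^ 2) ∂H) α := (hasDerivAt_id α).add main.2
  convert h2 using 1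
  rw [integral_neg, ← MeasureTheory.integral_const_mul]
  simp_rw [mul_div_assoc]
  ring


/-- There is a threshold S_ψ ≥ M such that ψ'(α) > 0 iff α > S_ψ
(for α > M), and ψ is strictly increasing (hence injective) on (S_ψ, ∞). -/
theorem psi_threshold (H : Measure ℝ) [IsProbabilityMeasure H] (M γ : ℝ)
    (hM : 0 < M) (hγ : 0 < γ)
    (hsupp : H (Set.Icc 0 M)ᶜ = 0)
    (hMsup : ∀ M' : ℝ, H (Set.Icc 0 M')ᶜ = 0 → M ≤ M')
    (hH0 : H ≠ Measure.dirac 0)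
    (ψ : ℝ → ℝ)
    (hψ : ∀ α : ℝ, M < α → ψ α = α + γ * α * ∫ l, l / (α - l) ∂H) :
    ∃ S : ℝ, M ≤ S ∧ (∀ α : ℝ, M < α → (0 < deriv ψ α ↔ S < α)) ∧
      StrictMonoOn ψ (Set.Ioi S) ∧ Set.InjOn ψ (Set.Ioi S) := by
  have hae : ∀ᵐ l ∂H, l ∈ Set.Icc 0 M := by
    rw [MeasureTheory.ae_iff]; exact hsupp
  set F : ℝ → ℝ := fun α => ∫ l, l ^ 2 / (α - l) ^ 2 ∂H with hF
  -- integrability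
  have hintF : ∀ α : ℝ, M < α → Integrable (fun l => l ^ 2 / (α - l) ^ 2) H := by
    intro α hα
    have hαM : (0:ℝ) < α - M := by linarith
    refine (integrable_const (M ^ 2 / (α - M) ^ 2)).mono'
      ((Measurable.div (by fun_prop) (by fun_prop)).aestronglyMeasurable) ?_
    filter_upwards [hae] with l hl
    rw [Real.norm_eq_abs, abs_of_nonneg (by positivity)]
    have h2 := hl.1; have h3 := hl.2
    exact div_le_div₀ (by positivity) (by nlinarith) (by positivity) (by nlinarith)
  -- bounds on F
  have hFle : ∀ α : ℝ, M < α → F α ≤ M ^ 2 / (α - M) ^ 2 := by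
    intro α hα
    have hαM : (0:ℝ) < α - M := by linarith
    have : F α ≤ ∫ _, M ^ 2 / (α - M) ^ 2 ∂H := by
      refine integral_mono_ae (hintF α hα) (integrable_const _) ?_
      filter_upwards [hae] with l hl
      have h2 := hl.1; have h3 := hl.2
      exact div_le_div₀ (by positivity) (by nlinarith) (by positivity) (by nlinarith)
    simpa using this
  have hFanti : ∀ a b : ℝ, M < a → a ≤ b → F b ≤ F a := by
    intro a b ha hab
    refine integral_mono_ae (hintF b (lt_of_lt_of_le ha hab)) (hintF a ha) ?_
    filter_upwards [hae] with l hl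
    have h2 := hl.1; have h3 := hl.2
    have hal : (0:ℝ) < a - l := by linarith
    exact div_le_div₀ (sq_nonneg l) le_rfl (by positivity) (by nlinarith)
  -- derivative of ψ on (M, ∞)
  have hderiv : ∀ α : ℝ, M < α → HasDerivAt ψ (1 - γ * F α) α := by
    intro α hα
    refine (psi_hasDeriv H M γ hM hγ hae α hα).congr_of_eventuallyEq ?_
    filter_upwards [Ioi_mem_nhds hα] with x hx
    rw [hψ x hx, ← MeasureTheory.integral_const_mul]
    simp_rw [mul_div_assoc]
  have hderiv' : ∀ α : ℝ, M < α → deriv ψ α = 1 - γ * F α := fun α hα =>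
    (hderiv α hα).deriv
  have hmono : ∀ a b : ℝ, M < a → a ≤ b → deriv ψ a ≤ deriv ψ b := by
    intro a b ha hab
    rw [hderiv' a ha, hderiv' b (lt_of_lt_of_le ha hab)]
    have := hFanti a b ha hab
    nlinarith
  -- continuity of F on (M, ∞)
  have hFcont : ∀ α : ℝ, M < α → ContinuousAt F α := by
    intro α hα
    set ε : ℝ := (α - M) / 2 with hε
    have hε0 : 0 < ε := by simp [hε]; linarith
    have key : ∀ x ∈ ball α ε, ∀ l ∈ Set.Icc 0 M, ε < x - l := by
      intro x hx l hl
      rw [mem_ball, Real.dist_eq, abs_lt] at hx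
      have := hl.2
      simp only [hε] at *
      linarith
    refine continuousAt_of_dominated
      (Filter.Eventually.of_forall fun x =>
        (Measurable.div (by fun_prop) (by fun_prop)).aestronglyMeasurable)
      ?_ (integrable_const (M ^ 2 / ε ^ 2)) ?_
    · filter_upwards [ball_mem_nhds α hε0] with x hx
      filter_upwards [hae] with l hl
      have h1 : ε < x - l := key x hx l hl
      rw [Real.norm_eq_abs, abs_of_nonneg (by positivity)]
      have h2 := hl.1; have h3 := hl.2
      exact div_le_div₀ (by positivity) (by nlinarith) (by positivity) (by nlinarith)
    · filter_upwards [hae] with l hl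
      have h1 : (0:ℝ) < α - l := by have := hl.2; linarith
      exact ContinuousAt.div continuousAt_const
        ((continuousAt_id.sub continuousAt_const).pow 2) (by positivity)
  have hdc : ∀ α : ℝ, M < α → ContinuousAt (deriv ψ) α := by
    intro α hα
    have hev : (fun x => 1 - γ * F x) =ᶠ[𝓝 α] deriv ψ := by
      filter_upwards [Ioi_mem_nhds hα] with x hx
      exact (hderiv' x hx).symm
    exact (continuousAt_const.sub ((hFcont α hα).const_mul γ)).congr hev
  -- eventual positivity
  have hpos : ∀ α : ℝ, M + Real.sqrt γ * M + 1 ≤ α → 0 < deriv ψ α := by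
    intro α hα'
    have hsq : (0:ℝ) ≤ Real.sqrt γ * M := by positivity
    have hα : M < α := by linarith
    rw [hderiv' α hα]
    have hs : Real.sqrt γ ^ 2 = γ := Real.sq_sqrt hγ.le
    have h2 : γ * M ^ 2 < (α - M) ^ 2 := by nlinarith [Real.sqrt_nonneg γ]
    have h3 : γ * F α ≤ γ * M ^ 2 / (α - M) ^ 2 := by
      rw [mul_div_assoc]
      exact mul_le_mul_of_nonneg_left (hFle α hα) hγ.le
    have h4 : γ * M ^ 2 / (α - M) ^ 2 < 1 :=
      (div_lt_one (by nlinarith)).mpr h2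
    linarith
  -- the threshold set
  set T : Set ℝ := insert M {α | M < α ∧ deriv ψ α ≤ 0} with hT
  have hMT : M ∈ T := mem_insert _ _
  have hbdd : BddAbove T := by
    refine ⟨max M (M + Real.sqrt γ * M + 1), fun x hx => ?_⟩
    rcases hx with rfl | hx
    · exact le_max_left _ _
    · by_contra hcon; push_neg at hcon
      have h1 : M + Real.sqrt γ * M + 1 ≤ x :=
        le_of_lt (lt_of_le_of_lt (le_max_right _ _) hcon)
      exact absurd (hpos x h1) (not_lt.mpr hx.2)
  have hMS : M ≤ sSup T := le_csSup hbdd hMT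
  -- the iff
  have hiff : ∀ α : ℝ, M < α → (0 < deriv ψ α ↔ sSup T < α) := by
    intro α hα
    constructor
    · intro hd
      by_contra hcon; push_neg at hcon
      rcases lt_or_eq_of_le hcon with hlt | heq
      · obtain ⟨x, hxT, hx⟩ := exists_lt_of_lt_csSup ⟨M, hMT⟩ hlt
        rcases hxT with rfl | hxT
        · exact absurd hx (not_lt.mpr hα.le)
        · have := hmono α x hα hx.le
          linarith [hxT.2]
      · -- α = sSup T, use continuity
        have hc := hdc α hα
        have h2 : ∀ᶠ x in 𝓝 α, 0 < deriv ψ x := hc.eventually (eventually_gt_nhds hd)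
        obtain ⟨δ, hδ0, hδ⟩ := Metric.eventually_nhds_iff.mp h2
        have hub : ∀ x ∈ T, x ≤ max M (α - δ / 2) := by
          intro x hx
          rcases hx with rfl | hx
          · exact le_max_left _ _
          · refine le_trans ?_ (le_max_right _ _)
            by_contra hcx; push_neg at hcx
            have hxS : x ≤ sSup T := le_csSup hbdd (Set.mem_insert_iff.mpr (Or.inr hx))
            rw [← heq] at hxS
            have hdist : dist x α < δ := by
              rw [Real.dist_eq, abs_lt]
              constructor <;> linarith
            exact absurd (hδ hdist) (not_lt.mpr hx.2)
        have h3 := csSup_le ⟨M, hMT⟩ hub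
        rw [← heq] at h3
        have h4 : max M (α - δ / 2) < α := max_lt hα (by linarith)
        linarith
    · intro hS
      by_contra hd; push_neg at hd
      have hmem : α ∈ T := Set.mem_insert_iff.mpr (Or.inr ⟨hα, hd⟩)
      have := le_csSup hbdd hmem
      linarith
  have hsub : Set.Ioi (sSup T) ⊆ Set.Ioi M := fun x hx => lt_of_le_of_lt hMS hx
  have hSM : StrictMonoOn ψ (Set.Ioi (sSup T)) := by
    apply strictMonoOn_of_deriv_pos (convex_Ioi _)
    · intro x hx
      exact ((hderiv x (hsub hx)).differentiableAt.continuousAt).continuousWithinAt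
    · intro x hx
      rw [interior_Ioi] at hx
      exact (hiff x (hsub hx)).mpr hx
  exact ⟨sSup T, hMS, hiff, hSM, hSM.injOn⟩
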